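/- Let X be a real inner product space, let e, x, y ∈ X be linearly independent, and suppose w = a·x + b·y + c·e for real numbers a, b, c. Then (x,x|y,e)_* > 0 and a = (w,x|y,e)_* / (x,x|y,e)_* and b = (w,y|x,e)_* / (x,x|y,e)_*, where (·,·|·,·)_* is the 3-iterated 2-inner product. -/
import Mathlib


open scoped InnerProductSpace

/-- The `n`-iterated 2-inner product `(x, y | xₙ, …, x₂)_*` on a real inner
product space, where the list `l = [xₙ, x_{n-1}, …, x₂]` collects the
conditioning vectors (so `n = l.length + 1`).  For the empty list it is the
inner product `⟪x, y⟫` (the convention for `n = 1`), and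
`(x, y | xₙ, …, x₂)_* = (x,y|x_{n-1},…,x₂)_* (xₙ,xₙ|x_{n-1},…,x₂)_*
  - (x,xₙ|x_{n-1},…,x₂)_* (xₙ,y|x_{n-1},…,x₂)_*`.
In particular `(x,y|z)_* = ⟪x,y⟫⟪z,z⟫ - ⟪x,z⟫⟪z,y⟫`. -/
noncomputable def iter2 {X : Type*} [NormedAddCommGroup X] [InnerProductSpace ℝ X] :
    X → X → List X → ℝ
  | x, y, [] => ⟪x, y⟫_ℝ
  | x, y, (z :: l) => iter2 x y l * iter2 z z l - iter2 x z l * iter2 z y l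

/-- Strict Cauchy–Schwarz: if `u ≠ 0` and `v` is not a multiple of `u`,
then `⟪u,v⟫² < ⟪u,u⟫⟪v,v⟫`. -/
lemma strict_cauchy_schwarz {X : Type*} [NormedAddCommGroup X] [InnerProductSpace ℝ X]
    {u v : X} (hu : u ≠ 0) (hv : ∀ r : ℝ, v ≠ r • u) :
    ⟪u, v⟫_ℝ ^ 2 < ⟪u, u⟫_ℝ * ⟪v, v⟫_ℝ := by
  have hv0 : v ≠ 0 := by
    intro h; exact hv 0 (by simp [h])
  have hle : |⟪u, v⟫_ℝ| ≤ ‖u‖ * ‖v‖ := abs_real_inner_le_norm u v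
  have hne : |⟪u, v⟫_ℝ| ≠ ‖u‖ * ‖v‖ := by
    intro h
    rw [← Real.norm_eq_abs] at h
    obtain ⟨r, -, hr⟩ := (norm_inner_eq_norm_iff (𝕜 := ℝ) hu hv0).mp h
    exact hv r hr
  have hlt : |⟪u, v⟫_ℝ| < ‖u‖ * ‖v‖ := lt_of_le_of_ne hle hne
  have h1 : ⟪u, v⟫_ℝ ^ 2 = |⟪u, v⟫_ℝ| ^ 2 := (sq_abs _).symm
  have h2 : ⟪u, u⟫_ℝ * ⟪v, v⟫_ℝ = (‖u‖ * ‖v‖) ^ 2 := by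
    rw [real_inner_self_eq_norm_mul_norm, real_inner_self_eq_norm_mul_norm]; ring
  rw [h1, h2]
  exact pow_lt_pow_left₀ hlt (abs_nonneg _) two_ne_zero

/-- If `e, x, y` are linearly independent vectors in a real inner product space
and `w = a x + b y + c e`, then `(x,x|y,e)_* > 0` and the coefficients `a, b`
are given by `a = (w,x|y,e)_* / (x,x|y,e)_*` and
`b = (w,y|x,e)_* / (x,x|y,e)_*`, where `(·,·|·,·)_*` is the 3-iterated
2-inner product. -/
theorem regression_coefficients {X : Type*} [NormedAddCommGroup X] [InnerProductSpace ℝ X]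
    (x y e w : X) (a b c : ℝ)
    (hli : LinearIndependent ℝ ![e, x, y])
    (hw : w = a • x + b • y + c • e) :
    0 < iter2 x x [y, e] ∧
      a = iter2 w x [y, e] / iter2 x x [y, e] ∧
      b = iter2 w y [x, e] / iter2 x x [y, e] := by
  -- extract a usable form of linear independence
  have key : ∀ α β γ : ℝ, α • e + β • x + γ • y = 0 → α = 0 ∧ β = 0 ∧ γ = 0 := by
    intro α β γ h
    have h' := Fintype.linearIndependent_iff.mp hli ![α, β, γ]
      (by simpa [Fin.sum_univ_three, add_assoc] using h)
    exact ⟨h' 0, h' 1, h' 2⟩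
  have he : e ≠ 0 := by
    intro h
    obtain ⟨h1, -, -⟩ := key 1 0 0 (by simp [h])
    norm_num at h1
  have hgpos : (0 : ℝ) < ⟪e, e⟫_ℝ := by
    rw [real_inner_self_eq_norm_mul_norm]
    have : 0 < ‖e‖ := norm_pos_iff.mpr he
    positivity
  have hu0 : (⟪e, e⟫_ℝ • x - ⟪x, e⟫_ℝ • e : X) ≠ 0 := by
    intro h
    have h0 : (-⟪x, e⟫_ℝ) • e + ⟪e, e⟫_ℝ • x + (0 : ℝ) • y = 0 := by
      linear_combination (norm := module) h
    exact absurd (key _ _ _ h0).2.1 hgpos.ne'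
  have hvu : ∀ r : ℝ, (⟪e, e⟫_ℝ • y - ⟪y, e⟫_ℝ • e : X) ≠
      r • (⟪e, e⟫_ℝ • x - ⟪x, e⟫_ℝ • e) := by
    intro r h
    have h0 : (r * ⟪x, e⟫_ℝ - ⟪y, e⟫_ℝ) • e + (-(r * ⟪e, e⟫_ℝ)) • x + ⟪e, e⟫_ℝ • y = 0 := by
      linear_combination (norm := module) h
    exact absurd (key _ _ _ h0).2.2 hgpos.ne'
  have hcs := strict_cauchy_schwarz hu0 hvu
  have hDid : iter2 x x [y, e] * ⟪e, e⟫_ℝ ^ 2 =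
      ⟪⟪e, e⟫_ℝ • x - ⟪x, e⟫_ℝ • e, ⟪e, e⟫_ℝ • x - ⟪x, e⟫_ℝ • e⟫_ℝ *
        ⟪⟪e, e⟫_ℝ • y - ⟪y, e⟫_ℝ • e, ⟪e, e⟫_ℝ • y - ⟪y, e⟫_ℝ • e⟫_ℝ -
      ⟪⟪e, e⟫_ℝ • x - ⟪x, e⟫_ℝ • e, ⟪e, e⟫_ℝ • y - ⟪y, e⟫_ℝ • e⟫_ℝ ^ 2 := by
    simp only [iter2, inner_sub_left, inner_sub_right, real_inner_smul_left,
      real_inner_smul_right, real_inner_comm e x, real_inner_comm e y, real_inner_comm y x]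
    ring
  have hD : 0 < iter2 x x [y, e] := by nlinarith [sq_nonneg ⟪e, e⟫_ℝ]
  refine ⟨hD, ?_, ?_⟩
  · have hwx : iter2 w x [y, e] = a * iter2 x x [y, e] := by
      simp only [iter2, hw, inner_add_left, real_inner_smul_left,
        real_inner_comm e x, real_inner_comm e y, real_inner_comm y x]
      ring
    rw [hwx, mul_div_assoc, div_self hD.ne', mul_one]
  · have hwy : iter2 w y [x, e] = b * iter2 x x [y, e] := by
      simp only [iter2, hw, inner_add_left, real_inner_smul_left,
        real_inner_comm e x, real_inner_comm e y, real_inner_comm y x]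
      ring
    rw [hwy, mul_div_assoc, div_self hD.ne', mul_one]
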